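/- In F_p, Σ_{r=1}^{p-1} [(p+t)!/(r+t+1)!] · [(r+2t)!/(2t)!] ≡ 0 (mod p), where t is the integer inverse of 3 mod p as above and the quotients denote integer products of consecutive integers. -/

import Mathlib

/-- `∑_{r=1}^{p-1} (p+t)!/(r+t+1)! · (r+2t)!/(2t)! ≡ 0 (mod p)`,
where each factorial quotient `a!/b!` denotes the product of the integers from `b+1` to `a`. -/
theorem stmt11 {p : ℕ} (hp : p.Prime) (hp3 : 3 < p) (t : ℕ)
    (ht : 3 * t = if p % 3 = 1 then 2 * p + 1 else p + 1) :
    ∑ r ∈ Finset.Icc 1 (p - 1),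
      (∏ i ∈ Finset.Icc (r + t + 2) (p + t), (i : ZMod p))
        * (∏ i ∈ Finset.Icc (2 * t + 1) (r + 2 * t), (i : ZMod p))
      = 0 := by
  have hp4 : p ≠ 4 := by rintro rfl; norm_num at hp
  have ht' : 3 * t = 2 * p + 1 ∨ 3 * t = p + 1 := by
    by_cases h : p % 3 = 1 <;> simp [h] at ht <;> omega
  have hpz : ((p : ℕ) : ZMod p) = 0 := ZMod.natCast_self p
  have h3t : (3 : ZMod p) * (t : ℕ) = 1 := by
    have e : (3 : ZMod p) * (t : ℕ) = ((3 * t : ℕ) : ZMod p) := by push_cast; ring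
    rcases ht' with h | h <;> rw [e, h] <;> push_cast [hpz] <;> ring
  set w : ℕ → ZMod p := fun r =>
    (∏ i ∈ Finset.Ico (r + t + 1) (p + t + 1), (i : ZMod p))
      * (∏ i ∈ Finset.Ico (2 * t + 1) (r + 2 * t + 1), (i : ZMod p)) with hw
  have key : ∀ r ∈ Finset.Icc 1 (p - 1),
      (∏ i ∈ Finset.Icc (r + t + 2) (p + t), (i : ZMod p))
        * (∏ i ∈ Finset.Icc (2 * t + 1) (r + 2 * t), (i : ZMod p))
      = 3 * (w (r + 1) - w r) := by
    intro r hr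
    simp only [Finset.mem_Icc] at hr
    have hr1 : r + t + 1 < p + t + 1 := by omega
    have hr2 : 2 * t + 1 ≤ r + 2 * t + 1 := by omega
    rw [hw]
    simp only
    rw [Finset.prod_eq_prod_Ico_succ_bot hr1,
      show r + 1 + t + 1 = r + t + 2 by ring,
      show r + 1 + 2 * t + 1 = (r + 2 * t + 1) + 1 by ring,
      Finset.prod_Ico_succ_top hr2,
      ← Finset.Ico_add_one_right_eq_Icc (a := r + t + 2), ← Finset.Ico_add_one_right_eq_Icc (a := 2 * t + 1)]
    set A := ∏ i ∈ Finset.Ico (r + t + 2) (p + t + 1), (i : ZMod p) with hA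
    set Q := ∏ i ∈ Finset.Ico (2 * t + 1) (r + 2 * t + 1), (i : ZMod p) with hQ
    push_cast
    linear_combination (-(A * Q)) * h3t
  rw [Finset.sum_congr rfl key]
  have hIcc : Finset.Icc 1 (p - 1) = Finset.Ico 1 p := by
    rw [← Finset.Ico_add_one_right_eq_Icc]; congr 1; omega
  rw [hIcc, Finset.sum_Ico_eq_sum_range]
  simp only [show ∀ i : ℕ, 1 + i = i + 1 from fun i => Nat.add_comm 1 i]
  rw [← Finset.mul_sum]
  have tele : ∑ i ∈ Finset.range (p - 1), (w (i + 1 + 1) - w (i + 1)) = w p - w 1 := by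
    have := Finset.sum_range_sub (fun i => w (i + 1)) (p - 1)
    simpa [show p - 1 + 1 = p by omega] using this
  rw [tele]
  have hwp : w p = 0 := by
    rw [hw]; simp only
    apply mul_eq_zero_of_right
    rcases ht' with h | h
    · exact Finset.prod_eq_zero (i := 2 * p)
        (by simp only [Finset.mem_Ico]; omega) (by push_cast [hpz]; ring)
    · exact Finset.prod_eq_zero (i := p)
        (by simp only [Finset.mem_Ico]; omega) hpz
  have hw1 : w 1 = 0 := by
    rw [hw]; simp only
    apply mul_eq_zero_of_left
    exact Finset.prod_eq_zero (i := p)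
      (by simp only [Finset.mem_Ico]; omega) hpz
  rw [hwp, hw1]
  ring
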